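/- Let d be a natural number, E := EuclideanSpace ℝ (Fin d), let Ω ⊆ E be a nonempty closed set, and let f : E → E satisfy f(Ω) ⊆ Ω and be Lipschitz on Ω with constant K < 1, with fixed point z* lying in the interior of Ω (f(z*) = z*). Let g : E → ℝ be continuous on Ω, differentiable at z*, and satisfy g(f(z)) ≥ g(z) for every z ∈ Ω. Then z* is a stationary point of g: ∇g(z*) = 0. -/
import Mathlib


/-- Stationarity of the limit: under the hypotheses of the convergence theorem, with the
fixed point `z*` in the interior of `Ω` and `g` differentiable at `z*`, the gradient of `g`
vanishes at `z*`. -/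
theorem stmt_14 (d : ℕ) (Ω : Set (EuclideanSpace ℝ (Fin d))) (hne : Ω.Nonempty)
    (hclosed : IsClosed Ω) (f : EuclideanSpace ℝ (Fin d) → EuclideanSpace ℝ (Fin d))
    (hmaps : Set.MapsTo f Ω Ω) (K : NNReal) (hK : K < 1) (hlip : LipschitzOnWith K f Ω)
    (zs : EuclideanSpace ℝ (Fin d)) (hzs : zs ∈ interior Ω) (hfix : f zs = zs)
    (g : EuclideanSpace ℝ (Fin d) → ℝ) (hg : ContinuousOn g Ω)
    (hdiff : DifferentiableAt ℝ g zs)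
    (hmono : ∀ z ∈ Ω, g z ≤ g (f z)) :
    gradient g zs = 0 := by
  have hzsΩ : zs ∈ Ω := interior_subset hzs
  -- iterates stay in Ω
  have hiter : ∀ (n : ℕ) (z : EuclideanSpace ℝ (Fin d)), z ∈ Ω → f^[n] z ∈ Ω := by
    intro n
    induction n with
    | zero => intro z hz; simpa using hz
    | succ n ih =>
      intro z hz
      rw [Function.iterate_succ_apply']
      exact hmaps (ih z hz)
  -- distance bound
  have hdist : ∀ (z : EuclideanSpace ℝ (Fin d)), z ∈ Ω → ∀ n : ℕ,
      dist (f^[n] z) zs ≤ (K : ℝ) ^ n * dist z zs := by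
    intro z hz n
    induction n with
    | zero => simp
    | succ n ih =>
      rw [Function.iterate_succ_apply']
      calc dist (f (f^[n] z)) zs = dist (f (f^[n] z)) (f zs) := by rw [hfix]
        _ ≤ (K : ℝ) * dist (f^[n] z) zs := hlip.dist_le_mul _ (hiter n z hz) _ hzsΩ
        _ ≤ (K : ℝ) * ((K : ℝ) ^ n * dist z zs) := by
            exact mul_le_mul_of_nonneg_left ih K.coe_nonneg
        _ = (K : ℝ) ^ (n + 1) * dist z zs := by ring
  -- g z ≤ g zs for all z ∈ Ω
  have hmax : ∀ z ∈ Ω, g z ≤ g zs := by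
    intro z hz
    have htend : Filter.Tendsto (fun n => f^[n] z) Filter.atTop (nhds zs) := by
      rw [tendsto_iff_dist_tendsto_zero]
      have h0 : Filter.Tendsto (fun n : ℕ => (K : ℝ) ^ n * dist z zs) Filter.atTop (nhds 0) := by
        have := tendsto_pow_atTop_nhds_zero_of_lt_one K.coe_nonneg (by exact_mod_cast hK)
        simpa using this.mul_const (dist z zs)
      exact squeeze_zero (fun n => dist_nonneg) (hdist z hz) h0
    have hcont : ContinuousAt g zs := hg.continuousAt (mem_interior_iff_mem_nhds.mp hzs)
    have hgtend : Filter.Tendsto (fun n => g (f^[n] z)) Filter.atTop (nhds (g zs)) :=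
      hcont.tendsto.comp htend
    have hle : ∀ n : ℕ, g z ≤ g (f^[n] z) := by
      intro n
      induction n with
      | zero => simp
      | succ n ih =>
        rw [Function.iterate_succ_apply']
        exact ih.trans (hmono _ (hiter n z hz))
    exact le_of_tendsto_of_tendsto' tendsto_const_nhds hgtend hle
  have hloc : IsLocalMax g zs := by
    have : ∀ᶠ x in nhds zs, x ∈ Ω := mem_interior_iff_mem_nhds.mp hzs
    exact this.mono fun x hx => hmax x hx
  have hfd : fderiv ℝ g zs = 0 := hloc.fderiv_eq_zero
  unfold gradient
  rw [hfd]
  simp
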